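/- Moser sequence L² decay: with w̄_n as in the Moser sequence (r₀ ∈ (0,1], n ≥ 2), one has ∫_{ℝ²} w̄_n² dx = (r₀²/(4 log n))(1 − (2 log²n + 2 log n + 1)/n²) + r₀² log n/(2 n²), and hence ∫_{ℝ²} w̄_n² dx → 0 as n → ∞. -/

import Mathlib

open MeasureTheory Real Filter

theorem polar2' (f : ℝ → ℝ) : ∫ x : EuclideanSpace ℝ (Fin 2), f ‖x‖ =
    2 * π * ∫ y in Set.Ioi (0:ℝ), y * f y := by
  rw [MeasureTheory.integral_fun_norm_addHaar volume f]
  have hb : (volume (Metric.ball (0:EuclideanSpace ℝ (Fin 2)) 1)).toReal = π := by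
    rw [EuclideanSpace.volume_ball]
    norm_num [Real.Gamma_two, Real.sq_sqrt Real.pi_pos.le, Real.pi_pos.le]
  rw [measureReal_def, hb]
  simp [finrank_euclideanSpace, smul_eq_mul]
  ring_nf

theorem ftc_piece' (r₀ a : ℝ) (ha : 0 < a) (har : a ≤ r₀) :
    ∫ y in a..r₀, y * (Real.log r₀ - Real.log y)^2 =
      r₀^2/4 * 1
      - a^2/4 * (2*(Real.log r₀ - Real.log a)^2 + 2*(Real.log r₀ - Real.log a) + 1) := by
  have hderiv : ∀ y ∈ Set.uIcc a r₀, HasDerivAt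
      (fun y => y^2/4 * (2*(Real.log r₀ - Real.log y)^2 + 2*(Real.log r₀ - Real.log y) + 1))
      (y * (Real.log r₀ - Real.log y)^2) y := by
    intro y hy
    rw [Set.uIcc_of_le har] at hy
    have hy0 : 0 < y := lt_of_lt_of_le ha hy.1
    have hlog : HasDerivAt (fun y => Real.log r₀ - Real.log y) (-(1/y)) y := by
      have := (hasDerivAt_const y (Real.log r₀)).sub (Real.hasDerivAt_log hy0.ne')
      exact this.congr_deriv (by ring)
    have h1 : HasDerivAt (fun y : ℝ => y^2/4) (y/2) y := by
      have := (hasDerivAt_pow 2 y).div_const 4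
      exact this.congr_deriv (by norm_num; ring)
    have h2 : HasDerivAt (fun y => 2*(Real.log r₀ - Real.log y)^2 + 2*(Real.log r₀ - Real.log y) + 1)
        (2*(2*(Real.log r₀ - Real.log y)^1*(-(1/y))) + 2*(-(1/y))) y :=
      (((hlog.pow 2).const_mul 2).add (hlog.const_mul 2)).add_const 1
    have := h1.mul h2
    exact this.congr_deriv (by field_simp; ring)
  rw [intervalIntegral.integral_eq_sub_of_hasDerivAt hderiv]
  · norm_num
  · apply ContinuousOn.intervalIntegrable
    apply continuousOn_id.mul
    apply ContinuousOn.pow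
    apply continuousOn_const.sub
    apply Real.continuousOn_log.mono
    intro y hy
    rw [Set.uIcc_of_le har] at hy
    exact fun h => (lt_of_lt_of_le ha hy.1).ne' h

theorem rhs_tendsto' (r₀ : ℝ) :
    Tendsto (fun n : ℕ => r₀ ^ 2 / (4 * Real.log n) *
        (1 - (2 * (Real.log n) ^ 2 + 2 * Real.log n + 1) / (n : ℝ) ^ 2) +
        r₀ ^ 2 * Real.log n / (2 * (n : ℝ) ^ 2)) atTop (nhds 0) := by
  have h1 : Tendsto (fun x : ℝ => Real.log x / x) atTop (nhds 0) := by
    have := Real.tendsto_pow_log_div_mul_add_atTop 1 0 1 one_ne_zero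
    simpa using this
  have h2 : Tendsto (fun x : ℝ => x⁻¹) atTop (nhds (0:ℝ)) := tendsto_inv_atTop_zero
  have hq : Tendsto (fun x : ℝ => (2*(Real.log x)^2 + 2*Real.log x + 1)/x^2) atTop (nhds 0) := by
    have h := (((h1.mul h1).const_mul 2).add ((h1.mul h2).const_mul 2)).add (h2.mul h2)
    simp only [mul_zero, zero_mul, add_zero, zero_add] at h
    apply h.congr'
    filter_upwards [eventually_gt_atTop (0:ℝ)] with x hx
    field_simp
  have hA : Tendsto (fun x : ℝ => r₀^2/(4*Real.log x)) atTop (nhds 0) := by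
    have h4 : Tendsto (fun x : ℝ => 4 * Real.log x) atTop atTop :=
      Real.tendsto_log_atTop.const_mul_atTop four_pos
    have h5 := h4.inv_tendsto_atTop.const_mul (r₀^2)
    rw [mul_zero] at h5
    simpa [div_eq_mul_inv, Pi.inv_def] using h5
  have hB : Tendsto (fun x : ℝ => r₀^2*Real.log x/(2*x^2)) atTop (nhds 0) := by
    have h := (h1.mul h2).const_mul (r₀^2/2)
    rw [mul_zero, mul_zero] at h
    apply h.congr'
    filter_upwards [eventually_gt_atTop (0:ℝ)] with x hx
    field_simp
  have htot : Tendsto (fun x : ℝ => r₀ ^ 2 / (4 * Real.log x) *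
      (1 - (2 * (Real.log x) ^ 2 + 2 * Real.log x + 1) / x ^ 2) +
      r₀ ^ 2 * Real.log x / (2 * x ^ 2)) atTop (nhds 0) := by
    have h := (hA.mul ((tendsto_const_nhds (x := (1:ℝ))).sub hq)).add hB
    simpa using h
  exact htot.comp tendsto_natCast_atTop_atTop

/-- The truncated-logarithm Moser function on the plane. -/
noncomputable def moserFn (r₀ : ℝ) (n : ℕ) (x : EuclideanSpace ℝ (Fin 2)) : ℝ :=
  if ‖x‖ ≤ r₀ / n then Real.sqrt (Real.log n) / Real.sqrt (2 * π)
  else if ‖x‖ ≤ r₀ then Real.log (r₀ / ‖x‖) / (Real.sqrt (2 * π) * Real.sqrt (Real.log n))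
  else 0

theorem moser_key' (r₀ : ℝ) (hr₀ : 0 < r₀) (n : ℕ) (hn : 2 ≤ n) :
    ∫ x, (moserFn r₀ n x) ^ 2 =
        r₀ ^ 2 / (4 * Real.log n) *
            (1 - (2 * (Real.log n) ^ 2 + 2 * Real.log n + 1) / (n : ℝ) ^ 2) +
          r₀ ^ 2 * Real.log n / (2 * (n : ℝ) ^ 2) := by
  open Set in
  have hn1 : (1:ℝ) < n := by exact_mod_cast Nat.lt_of_lt_of_le one_lt_two hn
  have hn0 : (0:ℝ) < n := lt_trans one_pos hn1
  set L := Real.log n with hLdef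
  have hL : 0 < L := Real.log_pos hn1
  set a := r₀ / n with hadef
  have ha : 0 < a := div_pos hr₀ hn0
  have har : a ≤ r₀ := by
    rw [hadef, div_le_iff₀ hn0]
    nlinarith
  have hπ : (0:ℝ) < 2 * π := by positivity
  set F : ℝ → ℝ := fun r =>
    (if r ≤ a then Real.sqrt L / Real.sqrt (2 * π)
     else if r ≤ r₀ then Real.log (r₀ / r) / (Real.sqrt (2 * π) * Real.sqrt L)
     else 0) ^ 2 with hFdef
  have h0 : ∫ x, (moserFn r₀ n x) ^ 2 = ∫ x : EuclideanSpace ℝ (Fin 2), F ‖x‖ := rfl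
  rw [h0, polar2']
  have hIoi : Ioc (0:ℝ) r₀ ∪ Ioi r₀ = Ioi 0 := Ioc_union_Ioi_eq_Ioi hr₀.le
  have hIoc : Ioc (0:ℝ) a ∪ Ioc a r₀ = Ioc 0 r₀ := Ioc_union_Ioc_eq_Ioc ha.le har
  have e1 : EqOn (fun y => y * F y) (fun y => y * (L / (2*π))) (Ioc 0 a) := by
    intro y hy
    simp only [hFdef, if_pos hy.2]
    rw [div_pow, Real.sq_sqrt hL.le, Real.sq_sqrt hπ.le]
  have e2 : EqOn (fun y => y * F y)
      (fun y => (y * (Real.log r₀ - Real.log y)^2) * (1 / (2*π*L))) (Ioc a r₀) := by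
    intro y hy
    have hya : ¬ (y ≤ a) := not_le.mpr hy.1
    have hy0 : 0 < y := lt_trans ha hy.1
    simp only [hFdef, if_neg hya, if_pos hy.2]
    rw [Real.log_div hr₀.ne' hy0.ne', div_pow, mul_pow, Real.sq_sqrt hL.le, Real.sq_sqrt hπ.le]
    field_simp
  have e3 : EqOn (fun y => y * F y) (fun _ => (0:ℝ)) (Ioi r₀) := by
    intro y hy
    have hy1 : ¬ (y ≤ a) := not_le.mpr (lt_of_le_of_lt har hy)
    have hy2 : ¬ (y ≤ r₀) := not_le.mpr hy
    simp [hFdef, if_neg hy1, if_neg hy2]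
  have i1 : IntegrableOn (fun y => y * F y) (Ioc 0 a) := by
    refine ((continuous_id.mul continuous_const).integrableOn_Ioc).congr_fun e1.symm measurableSet_Ioc
  have i2 : IntegrableOn (fun y => y * F y) (Ioc a r₀) := by
    have hc : ContinuousOn (fun y => (y * (Real.log r₀ - Real.log y)^2) * (1 / (2*π*L))) (Icc a r₀) := by
      apply ContinuousOn.mul _ continuousOn_const
      apply continuousOn_id.mul
      apply ContinuousOn.pow
      apply continuousOn_const.sub
      apply Real.continuousOn_log.mono
      intro y hy
      exact fun h => (lt_of_lt_of_le ha hy.1).ne' h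
    exact ((hc.integrableOn_Icc).mono_set Ioc_subset_Icc_self).congr_fun e2.symm measurableSet_Ioc
  have i3 : IntegrableOn (fun y => y * F y) (Ioi r₀) := by
    exact (integrableOn_zero).congr_fun e3.symm measurableSet_Ioi
  have hsplit : ∫ y in Ioi (0:ℝ), y * F y =
      (∫ y in Ioc 0 a, y * F y) + (∫ y in Ioc a r₀, y * F y) + (∫ y in Ioi r₀, y * F y) := by
    rw [← hIoi,
        setIntegral_union (Ioc_disjoint_Ioi le_rfl) measurableSet_Ioi (by rw [← hIoc] at *; exact i1.union i2) i3,
        ← hIoc, setIntegral_union (Ioc_disjoint_Ioc.mpr (by simp [min_le_iff]))  measurableSet_Ioc i1 i2]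
  have E1 : ∫ y in Ioc (0:ℝ) a, y * F y = a^2/2 * (L/(2*π)) := by
    rw [setIntegral_congr_fun measurableSet_Ioc e1, ← intervalIntegral.integral_of_le ha.le,
        intervalIntegral.integral_mul_const, integral_id]
    ring
  have E2 : ∫ y in Ioc a r₀, y * F y =
      (r₀^2/4 * 1 - a^2/4 * (2*(Real.log r₀ - Real.log a)^2 + 2*(Real.log r₀ - Real.log a) + 1)) * (1/(2*π*L)) := by
    rw [setIntegral_congr_fun measurableSet_Ioc e2, ← intervalIntegral.integral_of_le har,
        intervalIntegral.integral_mul_const, ftc_piece' r₀ a ha har]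
  have E3 : ∫ y in Ioi r₀, y * F y = 0 := by
    rw [setIntegral_congr_fun measurableSet_Ioi e3]; simp
  rw [hsplit, E1, E2, E3]
  have hla : Real.log r₀ - Real.log a = L := by
    rw [hadef, Real.log_div hr₀.ne' hn0.ne']; ring
  rw [hla, hadef]
  have hπ0 : π ≠ 0 := Real.pi_ne_zero
  have hn0' : (n:ℝ) ≠ 0 := hn0.ne'
  field_simp
  ring

theorem stmt_13 (r₀ : ℝ) (hr₀ : 0 < r₀) (hr₀' : r₀ ≤ 1) :
    (∀ n : ℕ, 2 ≤ n →
      ∫ x, (moserFn r₀ n x) ^ 2 =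
        r₀ ^ 2 / (4 * Real.log n) *
            (1 - (2 * (Real.log n) ^ 2 + 2 * Real.log n + 1) / (n : ℝ) ^ 2) +
          r₀ ^ 2 * Real.log n / (2 * (n : ℝ) ^ 2)) ∧
    Tendsto (fun n : ℕ => ∫ x, (moserFn r₀ n x) ^ 2) atTop (nhds 0) := by
  refine ⟨fun n hn => moser_key' r₀ hr₀ n hn, ?_⟩
  apply Tendsto.congr' _ (rhs_tendsto' r₀)
  filter_upwards [eventually_ge_atTop 2] with n hn
  exact (moser_key' r₀ hr₀ n hn).symm
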